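/- For any 4×4 Hermitian positive semidefinite matrix ρ with trace 1 that can be written as ρ = p₁ |e₁⟩⟨e₁| ⊗ σ₁ + p₂ |e₂⟩⟨e₂| ⊗ σ₂, where {|e₁⟩,|e₂⟩} is an orthonormal basis of ℂ² and σ₁, σ₂ are 2×2 density matrices, the modulus of the (1,4) entry equals the modulus of the (2,3) entry: |ρ₁₄| = |ρ₂₃|. -/

import Mathlib

open Matrix Kronecker ComplexOrder

/-- Outer product |v⟩⟨v| of a vector with itself. -/
noncomputable def outer {n : Type*} (v : n → ℂ) : Matrix n n ℂ :=
  Matrix.vecMulVec v (fun j => star (v j))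

set_option maxHeartbeats 1000000 in
theorem stmt0 (ρ : Matrix (Fin 2 × Fin 2) (Fin 2 × Fin 2) ℂ)
    (hρ : ρ.PosSemidef) (htr : ρ.trace = 1)
    (p : Fin 2 → ℝ) (e : Fin 2 → (Fin 2 → ℂ)) (σ : Fin 2 → Matrix (Fin 2) (Fin 2) ℂ)
    (hp : ∀ k, 0 ≤ p k) (hpsum : ∑ k, p k = 1)
    (horth : ∀ k l, ∑ j, star (e k j) * e l j = if k = l then 1 else 0)
    (hσpsd : ∀ k, (σ k).PosSemidef) (hσtr : ∀ k, (σ k).trace = 1)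
    (hdecomp : ρ = ∑ k, (p k : ℂ) • (outer (e k) ⊗ₖ σ k)) :
    ‖ρ (0, 0) (1, 1)‖ = ‖ρ (0, 1) (1, 0)‖ := by
  -- Hermiticity of σ k
  have herm : ∀ k : Fin 2, (σ k) 1 0 = star ((σ k) 0 1) := by
    intro k
    have h := (hσpsd k).isHermitian
    exact (h.apply 1 0).symm
  -- unitarity of the matrix with columns e k
  set U : Matrix (Fin 2) (Fin 2) ℂ := Matrix.of fun j k => e k j with hU
  have hUnit : Uᴴ * U = 1 := by
    ext k l
    simp only [Matrix.mul_apply, Matrix.conjTranspose_apply, hU, Matrix.of_apply,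
      Matrix.one_apply]
    exact horth k l
  have hUnit' : U * Uᴴ = 1 := mul_eq_one_comm.mp hUnit
  have key : e 0 0 * star (e 0 1) + e 1 0 * star (e 1 1) = 0 := by
    have := congrFun (congrFun hUnit' 0) 1
    simpa [Matrix.mul_apply, Matrix.conjTranspose_apply, hU, Fin.sum_univ_two,
      Matrix.one_apply] using this
  have key' : e 1 0 * star (e 1 1) = -(e 0 0 * star (e 0 1)) := by linear_combination key
  set t : ℂ := e 0 0 * star (e 0 1) with ht
  have h1 : ρ (0, 0) (1, 1) = t * ((p 0 : ℂ) * (σ 0) 0 1 - (p 1 : ℂ) * (σ 1) 0 1) := by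
    rw [hdecomp]
    simp only [Fin.sum_univ_two, Matrix.add_apply, Matrix.smul_apply,
      Matrix.kroneckerMap_apply, outer, Matrix.vecMulVec_apply, smul_eq_mul]
    rw [key', ← ht]
    ring
  have h2 : ρ (0, 1) (1, 0) = t * ((p 0 : ℂ) * (σ 0) 1 0 - (p 1 : ℂ) * (σ 1) 1 0) := by
    rw [hdecomp]
    simp only [Fin.sum_univ_two, Matrix.add_apply, Matrix.smul_apply,
      Matrix.kroneckerMap_apply, outer, Matrix.vecMulVec_apply, smul_eq_mul]
    rw [key', ← ht]
    ring
  have h3 : (p 0 : ℂ) * (σ 0) 1 0 - (p 1 : ℂ) * (σ 1) 1 0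
      = star ((p 0 : ℂ) * (σ 0) 0 1 - (p 1 : ℂ) * (σ 1) 0 1) := by
    rw [herm 0, herm 1]
    simp [Complex.star_def, Complex.conj_ofReal]
  clear_value t
  rw [h1, h2, h3, norm_mul, norm_mul]
  congr 1
  exact (Complex.norm_conj _).symm
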